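/- Let (a, b) be a point in the interior of the positive definiteness region 𝒫 = 𝒫₁ ∪ 𝒫₂, where 𝒫₁ = {(a,b) ∈ ℝ² : a²/8 + (b − 1/4)² ≤ 1/16} and 𝒫₂ = {(a,b) ∈ ℝ² : a²/8 + (b − 1/4)² ≥ 1/16 and |a| − 1/2 ≤ b ≤ 1/6}, and set G(z) = a z + b z². Then 1 + 2 Re G(z) > 0 for all z ∈ 𝔻, and there exists a constant C(a,b) ≥ 0, with C(a,b) > 0 unless (a,b) = (0,0), together with constants C' > 0 and r₀ ∈ (0,1), such that for all r ∈ (r₀, 1): | N_G(r) − r²/(1−r²) + C(a,b) | ≤ C' (1−r²). -/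

import Mathlib

open Complex MeasureTheory

/-- The Edelman–Kostlan integral: the expected number of zeros in `𝔻(r)` of the GAF
associated with `G(z) = Σ_{k≥1} conj(γ(k)) z^k`. -/
noncomputable def NG (G : ℂ → ℂ) (r : ℝ) : ℝ :=
  (1 / Real.pi) * ∫ z in Metric.ball (0 : ℂ) r,
    (1 / (1 - ‖z‖ ^ 2) ^ 2 - ‖deriv G z‖ ^ 2 / (1 + 2 * (G z).re) ^ 2)

/-- The positive definiteness region `𝒫 = 𝒫₁ ∪ 𝒫₂` for the covariance
`γ(0)=1, γ(±1)=a, γ(±2)=b`. -/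
def posDefRegion : Set (ℝ × ℝ) :=
  {p | p.1 ^ 2 / 8 + (p.2 - 1 / 4) ^ 2 ≤ 1 / 16} ∪
  {p | 1 / 16 ≤ p.1 ^ 2 / 8 + (p.2 - 1 / 4) ^ 2 ∧ |p.1| - 1 / 2 ≤ p.2 ∧ p.2 ≤ 1 / 6}

lemma q_nonneg {a b : ℝ} (h : (a, b) ∈ posDefRegion) {c : ℝ} (hc : c ∈ Set.Icc (-1:ℝ) 1) :
    0 ≤ 1 + 2*a*c + 2*b*(2*c^2 - 1) := by
  obtain ⟨hc1, hc2⟩ := hc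
  rcases h with h | ⟨h1, h2, h3⟩
  · simp only [Set.mem_setOf_eq] at h
    rcases eq_or_lt_of_le (by nlinarith [sq_nonneg a, sq_nonneg (b - 1/4)] : (0:ℝ) ≤ b) with hb | hb
    · have ha : a = 0 := by nlinarith
      rw [ha, ← hb]; ring_nf; norm_num
    · nlinarith [sq_nonneg (4*b*c + a), hb]
  · simp only [Set.mem_setOf_eq] at *
    have habs := abs_le.mp (by linarith : |a| ≤ b + 1/2)
    rcases le_or_gt b 0 with hb | hb
    · nlinarith [mul_nonneg (by linarith : (0:ℝ) ≤ 1 - c) (by linarith [habs.1, habs.2] : (0:ℝ) ≤ 1 - 2*a + 2*b),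
        mul_nonneg (by linarith : (0:ℝ) ≤ 1 + c) (by linarith [habs.1] : (0:ℝ) ≤ 1 + 2*a + 2*b),
        mul_nonneg (mul_nonneg (by linarith : (0:ℝ) ≤ -b) (by linarith : (0:ℝ) ≤ 1 - c)) (by linarith : (0:ℝ) ≤ 1 + c)]
    · have hsq : 16*b^2 ≤ a^2 := by nlinarith
      rcases le_or_gt a 0 with ha | ha
      · have h4b : a ≤ -(4*b) := by nlinarith
        nlinarith [mul_nonneg (by linarith : (0:ℝ) ≤ 1 - c) (by nlinarith [mul_nonneg hb.le (by linarith : (0:ℝ) ≤ 1 - c)] : (0:ℝ) ≤ -(2*b*(c+1) + a)),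
          habs.1]
      · have h4b : 4*b ≤ a := by nlinarith
        nlinarith [mul_nonneg (by linarith : (0:ℝ) ≤ 1 + c) (by nlinarith [mul_nonneg hb.le (by linarith : (0:ℝ) ≤ 1 - c)] : (0:ℝ) ≤ 2*b*(c-1) + a),
          habs.2]

lemma q_pos {a b : ℝ} (hab : (a, b) ∈ interior posDefRegion) {c : ℝ}
    (hc : c ∈ Set.Icc (-1:ℝ) 1) : 0 < 1 + 2*a*c + 2*b*(2*c^2 - 1) := by
  obtain ⟨ε, hε, hball⟩ := Metric.isOpen_iff.mp isOpen_interior _ hab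
  by_contra hcon
  push_neg at hcon
  set s := ε / 2 with hs
  have hmem : ((a - s*c, b - s*(2*c^2-1)) : ℝ × ℝ) ∈ posDefRegion := by
    refine interior_subset (hball ?_)
    have h1 : |(-(s*c))| ≤ s := by
      rw [abs_neg, abs_mul, abs_of_pos (by positivity : (0:ℝ) < s)]
      nlinarith [abs_le.mpr ⟨hc.1, hc.2⟩, abs_nonneg c, (abs_le.mp (abs_le.mpr ⟨hc.1, hc.2⟩)).2]
    have h2 : |(-(s*(2*c^2-1)))| ≤ s := by
      rw [abs_neg, abs_mul, abs_of_pos (by positivity : (0:ℝ) < s)]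
      have : |2*c^2-1| ≤ 1 := by
        rw [abs_le]; constructor <;> nlinarith [hc.1, hc.2, sq_nonneg c]
      nlinarith
    rw [Metric.mem_ball, Prod.dist_eq]
    simp only [Real.dist_eq]
    have : a - s*c - a = -(s*c) := by ring
    have h2' : b - s*(2*c^2-1) - b = -(s*(2*c^2-1)) := by ring
    rw [this, h2']
    exact lt_of_le_of_lt (max_le h1 h2) (by linarith)
  have := q_nonneg hmem hc
  have hpos : 0 < c^2 + (2*c^2-1)^2 := by nlinarith [sq_nonneg (2*c^2 - 3/4)]
  nlinarith [this, hcon]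

lemma disk_bound {a b : ℝ} (hab : (a, b) ∈ interior posDefRegion) :
    ∃ δ > 0, ∀ z : ℂ, ‖z‖ ≤ 1 → δ ≤ 1 + 2*(a*z.re + b*(z.re^2 - z.im^2)) := by
  obtain ⟨c₀, hc₀, hmin'⟩ := (isCompact_Icc : IsCompact (Set.Icc (-1:ℝ) 1)).exists_isMinOn
    ⟨0, by norm_num⟩ (Continuous.continuousOn (by continuity)
      (f := fun c => 1 + 2*a*c + 2*b*(2*c^2 - 1)))
  have hmin : ∀ c ∈ Set.Icc (-1:ℝ) 1, 1 + 2*a*c₀ + 2*b*(2*c₀^2-1) ≤ 1 + 2*a*c + 2*b*(2*c^2-1) :=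
    fun c hcc => hmin' hcc
  set δ := 1 + 2*a*c₀ + 2*b*(2*c₀^2 - 1) with hδ
  have hδpos : 0 < δ := q_pos hab hc₀
  refine ⟨δ, hδpos, fun z hz => ?_⟩
  set p : ℂ → ℂ := fun w => Complex.exp (-(1 + 2*((a:ℂ)*w + (b:ℂ)*w^2))) with hp
  have hdiff : Differentiable ℂ p := by
    apply Complex.differentiable_exp.comp
    fun_prop
  have hfr : ∀ w ∈ frontier (Metric.ball (0:ℂ) 1), ‖p w‖ ≤ Real.exp (-δ) := by
    intro w hw
    rw [frontier_ball (0:ℂ) one_ne_zero, mem_sphere_zero_iff_norm] at hw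
    have hw2 : w.re^2 + w.im^2 = 1 := by
      have := Complex.sq_norm w
      rw [Complex.normSq_apply] at this
      nlinarith [this, hw]
    have hre : (-(1 + 2*((a:ℂ)*w + (b:ℂ)*w^2))).re = -(1 + 2*a*w.re + 2*b*(2*w.re^2-1)) := by
      simp [Complex.add_re, Complex.mul_re, Complex.ofReal_re, Complex.ofReal_im, sq]
      linear_combination (2*b) * hw2
    rw [hp]
    simp only [Complex.norm_exp, hre]
    apply Real.exp_le_exp.mpr
    have hcre : w.re ∈ Set.Icc (-1:ℝ) 1 := by
      constructor <;> nlinarith [sq_nonneg w.im]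
    linarith [hmin w.re hcre]
  have hcl : z ∈ closure (Metric.ball (0:ℂ) 1) := by
    rw [closure_ball (0:ℂ) one_ne_zero, Metric.mem_closedBall, dist_zero_right]; exact hz
  have := Complex.norm_le_of_forall_mem_frontier_norm_le Metric.isBounded_ball
    hdiff.diffContOnCl hfr hcl
  rw [hp] at this
  simp only [Complex.norm_exp] at this
  have hre2 : (-(1 + 2*((a:ℂ)*z + (b:ℂ)*z^2))).re = -(1 + 2*(a*z.re + b*(z.re^2 - z.im^2))) := by
    simp [Complex.add_re, Complex.mul_re, Complex.ofReal_re, Complex.ofReal_im, sq]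
  rw [hre2] at this
  have := Real.exp_le_exp.mp this
  linarith

lemma first_integral {r : ℝ} (hr0 : 0 < r) (hr1 : r < 1) :
    ∫ z in Metric.ball (0:ℂ) r, 1/(1-‖z‖^2)^2 = Real.pi * r^2 / (1-r^2) := by
  have hr2 : 1 - r^2 > 0 := by nlinarith
  set g : ℝ → ℝ := fun s => 1/(1-s^2)^2 with hg
  set f : ℝ → ℝ := Set.indicator (Set.Iio r) g with hf
  have h1 : ∫ z in Metric.ball (0:ℂ) r, 1/(1-‖z‖^2)^2 = ∫ z : ℂ, f ‖z‖ := by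
    rw [← integral_indicator measurableSet_ball]
    congr 1
    funext z
    by_cases hz : z ∈ Metric.ball (0:ℂ) r
    · rw [Set.indicator_of_mem hz, hf, Set.indicator_of_mem (by
        rwa [Set.mem_Iio, ← mem_ball_zero_iff])]
    · rw [Set.indicator_of_notMem hz, hf, Set.indicator_of_notMem (by
        rwa [Set.mem_Iio, ← mem_ball_zero_iff])]
  rw [h1, MeasureTheory.integral_fun_norm_addHaar (volume : Measure ℂ) f]
  have hdim : Module.finrank ℝ ℂ = 2 := Complex.finrank_real_complex
  rw [hdim]
  have hvol : (volume : Measure ℂ).real (Metric.ball 0 1) = Real.pi := by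
    rw [Measure.real, Complex.volume_ball]
    simp [ENNReal.toReal_mul]
  rw [hvol]
  have h2 : ∫ y in Set.Ioi (0:ℝ), y ^ (2-1) • f y = ∫ y in Set.Ioo (0:ℝ) r, y * g y := by
    have hn : (2:ℕ) - 1 = 1 := rfl
    simp only [hn, pow_one, smul_eq_mul]
    have : ∀ y : ℝ, y * f y = Set.indicator (Set.Iio r) (fun y => y * g y) y := by
      intro y
      by_cases hy : y ∈ Set.Iio r
      · rw [hf, Set.indicator_of_mem hy, Set.indicator_of_mem hy]
      · rw [hf, Set.indicator_of_notMem hy, Set.indicator_of_notMem hy, mul_zero]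
    simp_rw [this]
    rw [setIntegral_indicator measurableSet_Iio, Set.Ioi_inter_Iio]
  rw [h2]
  have h3 : ∫ y in Set.Ioo (0:ℝ) r, y * g y = ∫ y in (0:ℝ)..r, y * g y := by
    rw [intervalIntegral.integral_of_le hr0.le, integral_Ioc_eq_integral_Ioo]
  have h4 : ∫ y in (0:ℝ)..r, y * g y = 1/(2*(1-r^2)) - 1/2 := by
    have hderiv : ∀ y ∈ Set.uIcc (0:ℝ) r, HasDerivAt (fun t => (2*(1-t^2))⁻¹) (y * g y) y := by
      intro y hy
      rw [Set.uIcc_of_le hr0.le] at hy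
      have hy2 : (0:ℝ) < 1 - y^2 := by nlinarith [mul_le_mul hy.2 hy.2 hy.1 hr0.le]
      have hne : (1 - y^2) ≠ 0 := ne_of_gt hy2
      have hyne : 2*(1-y^2) ≠ 0 := by positivity
      have hd : HasDerivAt (fun t : ℝ => 2*(1-t^2)) (-(4*y)) y := by
        have h := ((hasDerivAt_pow 2 y).const_sub 1).const_mul (2:ℝ)
        exact h.congr_deriv (by norm_num <;> ring)
      have := hd.inv hyne
      refine this.congr_deriv ?_
      rw [hg]
      field_simp
      ring
    rw [intervalIntegral.integral_eq_sub_of_hasDerivAt hderiv ?_]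
    · norm_num
    · apply ContinuousOn.intervalIntegrable
      apply ContinuousOn.mul continuousOn_id
      apply ContinuousOn.div continuousOn_const
      · fun_prop
      · intro y hy
        rw [Set.uIcc_of_le hr0.le] at hy
        have hy2 : (0:ℝ) < 1 - y^2 := by nlinarith [mul_le_mul hy.2 hy.2 hy.1 hr0.le]
        positivity
  rw [h3, h4]
  simp only [smul_eq_mul, nsmul_eq_mul]
  push_cast
  field_simp
  ring

/-- Case (IV): for `(a,b)` interior to `𝒫`,
`N_G(r) = r²/(1-r²) - C(a,b) + O(1-r²)` with `C(a,b) ≥ 0`, positive unless `(a,b)=(0,0)`. -/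
theorem stmt_7 (a b : ℝ) (hab : (a, b) ∈ interior posDefRegion)
    (G : ℂ → ℂ) (hG : ∀ z : ℂ, G z = (a : ℂ) * z + (b : ℂ) * z ^ 2) :
    (∀ z ∈ Metric.ball (0 : ℂ) 1, 0 < 1 + 2 * (G z).re) ∧
    ∃ Cab : ℝ, 0 ≤ Cab ∧ ((a, b) ≠ (0, 0) → 0 < Cab) ∧
      ∃ C' > 0, ∃ r₀ ∈ Set.Ioo (0 : ℝ) 1, ∀ r ∈ Set.Ioo r₀ 1,
        |NG G r - r ^ 2 / (1 - r ^ 2) + Cab| ≤ C' * (1 - r ^ 2) := by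
  obtain ⟨δ, hδpos, hδ⟩ := disk_bound hab
  have hre : ∀ z : ℂ, (G z).re = a*z.re + b*(z.re^2 - z.im^2) := by
    intro z
    rw [hG z]
    simp [Complex.add_re, Complex.mul_re, Complex.ofReal_re, Complex.ofReal_im, sq]
  have hP : ∀ z : ℂ, ‖z‖ ≤ 1 → δ ≤ 1 + 2*(G z).re := by
    intro z hz; rw [hre z]; exact hδ z hz
  -- first conjunct
  have hpos1 : ∀ z ∈ Metric.ball (0 : ℂ) 1, 0 < 1 + 2 * (G z).re := by
    intro z hz
    rw [mem_ball_zero_iff] at hz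
    linarith [hP z hz.le]
  refine ⟨hpos1, ?_⟩
  -- derivative of G
  have hderivG : ∀ z : ℂ, deriv G z = (a:ℂ) + 2*b*z := by
    intro z
    have hGfun : G = fun w => (a:ℂ)*w + (b:ℂ)*w^2 := funext hG
    have hd : HasDerivAt (fun w : ℂ => (a:ℂ)*w + (b:ℂ)*w^2) ((a:ℂ) + 2*b*z) z := by
      have h1 : HasDerivAt (fun w : ℂ => (a:ℂ)*w) ((a:ℂ)*1) z := (hasDerivAt_id z).const_mul (a:ℂ)
      have h2 : HasDerivAt (fun w : ℂ => (b:ℂ)*w^2) ((b:ℂ)*(2*z^1)) z := by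
        have := (hasDerivAt_pow 2 z).const_mul (b:ℂ)
        exact this.congr_deriv (by push_cast; ring)
      have := h1.add h2
      exact this.congr_deriv (by ring)
    rw [hGfun]
    exact hd.deriv
  -- the subtracted integrand
  set F : ℂ → ℝ := fun z => ‖(a:ℂ) + 2*b*z‖^2 / (1 + 2*(G z).re)^2 with hF
  have hFeq : ∀ z : ℂ, ‖deriv G z‖^2 / (1 + 2*(G z).re)^2 = F z := by
    intro z; rw [hF]; simp only [hderivG z]
  have hFnonneg : ∀ z : ℂ, 0 ≤ F z := fun z => by rw [hF]; positivity
  -- continuity of F on closed unit ball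
  have hGcont : Continuous G := by
    have hGfun : G = fun w => (a:ℂ)*w + (b:ℂ)*w^2 := funext hG
    rw [hGfun]; fun_prop
  have hFcont : ContinuousOn F (Metric.closedBall (0:ℂ) 1) := by
    apply ContinuousOn.div
    · fun_prop
    · exact ((continuous_const.add (continuous_const.mul
        (Complex.continuous_re.comp hGcont))).pow 2).continuousOn
    · intro z hz
      rw [Metric.mem_closedBall, dist_zero_right] at hz
      have h0 : 0 < 1 + 2*(G z).re := lt_of_lt_of_le hδpos (hP z hz)
      positivity
  have hFint : IntegrableOn F (Metric.closedBall (0:ℂ) 1) :=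
    hFcont.integrableOn_compact (isCompact_closedBall 0 1)
  have hFint1 : IntegrableOn F (Metric.ball (0:ℂ) 1) :=
    hFint.mono_set Metric.ball_subset_closedBall
  -- the constant and bound M
  set K : ℝ := |a| + 2*|b| with hK
  set M : ℝ := K^2 / δ^2 with hM
  have hMnonneg : 0 ≤ M := by positivity
  have hFbound : ∀ z : ℂ, ‖z‖ ≤ 1 → F z ≤ M := by
    intro z hz
    rw [hF, hM]
    have hnum : ‖(a:ℂ) + 2*b*z‖ ≤ K := by
      calc ‖(a:ℂ) + 2*b*z‖ ≤ ‖(a:ℂ)‖ + ‖(2:ℂ)*b*z‖ := norm_add_le _ _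
        _ ≤ |a| + 2*|b| := by
            simp only [norm_mul, Complex.norm_real, Complex.norm_ofNat, Real.norm_eq_abs]
            have : ‖(2:ℂ)‖ = 2 := by norm_num
            nlinarith [norm_nonneg z, abs_nonneg b, mul_le_mul_of_nonneg_left hz
              (by positivity : (0:ℝ) ≤ 2*|b|)]
    have hden := hP z hz
    apply div_le_div₀ (by positivity)
    · exact pow_le_pow_left₀ (norm_nonneg _) hnum 2
    · positivity
    · exact pow_le_pow_left₀ hδpos.le hden 2
  set Cab : ℝ := (1/Real.pi) * ∫ z in Metric.ball (0:ℂ) 1, F z with hCab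
  have hπ : (0:ℝ) < Real.pi := Real.pi_pos
  refine ⟨Cab, ?_, ?_, M + 1, by positivity, 1/2, by norm_num, ?_⟩
  · -- Cab ≥ 0
    rw [hCab]
    apply mul_nonneg (by positivity)
    exact setIntegral_nonneg measurableSet_ball (fun x _ => hFnonneg x)
  · -- Cab > 0 when (a,b) ≠ (0,0)
    intro hne
    have : ∃ z₁ : ℂ, z₁ ∈ Metric.ball (0:ℂ) 1 ∧ (a:ℂ) + 2*b*z₁ ≠ 0 := by
      by_cases ha : a = 0
      · have hb : b ≠ 0 := by
          intro hb; exact hne (by rw [ha, hb])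
        refine ⟨1/2, by norm_num [Metric.mem_ball], ?_⟩
        rw [ha]
        simp only [Complex.ofReal_zero, zero_add]
        intro hcon
        apply hb
        have : (b:ℂ) = 0 := by
          field_simp at hcon
          exact_mod_cast hcon
        exact_mod_cast this
      · refine ⟨0, by norm_num [Metric.mem_ball], ?_⟩
        simp only [mul_zero, add_zero]
        exact_mod_cast Complex.ofReal_ne_zero.mpr ha
    obtain ⟨z₁, hz₁, hnum⟩ := this
    have hz₁n : ‖z₁‖ < 1 := mem_ball_zero_iff.mp hz₁
    have hFz₁ : 0 < F z₁ := by
      rw [hF]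
      have h1 : 0 < ‖(a:ℂ) + 2*b*z₁‖ := norm_pos_iff.mpr hnum
      have h2 : 0 < 1 + 2*(G z₁).re := lt_of_lt_of_le hδpos (hP z₁ hz₁n.le)
      positivity
    have hFca : ContinuousAt F z₁ :=
      hFcont.continuousAt (Filter.mem_of_superset (Metric.isOpen_ball.mem_nhds hz₁)
        Metric.ball_subset_closedBall)
    obtain ⟨ε, hε, hball'⟩ := Metric.continuousAt_iff.mp hFca (F z₁/2) (half_pos hFz₁)
    set ε₂ : ℝ := min ε (1 - ‖z₁‖) with hε₂
    have hε₂pos : 0 < ε₂ := lt_min hε (by linarith)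
    have hsub : Metric.ball z₁ ε₂ ⊆ Metric.ball (0:ℂ) 1 := by
      intro y hy
      rw [mem_ball_zero_iff]
      rw [Metric.mem_ball] at hy
      calc ‖y‖ ≤ ‖y - z₁‖ + ‖z₁‖ := by
            have := norm_add_le (y - z₁) z₁; simpa using this
        _ < ε₂ + ‖z₁‖ := by
            rw [dist_eq_norm] at hy; linarith
        _ ≤ 1 := by
            have := min_le_right ε (1 - ‖z₁‖); rw [← hε₂] at this; linarith
    have hlow : ∀ y ∈ Metric.ball z₁ ε₂, F z₁/2 ≤ F y := by
      intro y hy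
      rw [Metric.mem_ball] at hy
      have := hball' (lt_of_lt_of_le hy (min_le_left _ _))
      rw [Real.dist_eq, abs_lt] at this
      linarith [this.1]
    have hint2 : (F z₁/2) * ((volume (Metric.ball z₁ ε₂)).toReal)
        ≤ ∫ z in Metric.ball z₁ ε₂, F z :=
      setIntegral_ge_of_const_le_real measurableSet_ball measure_ball_lt_top.ne hlow
        (hFint1.mono_set hsub)
    have hmono : ∫ z in Metric.ball z₁ ε₂, F z ≤ ∫ z in Metric.ball (0:ℂ) 1, F z :=
      setIntegral_mono_set hFint1 (ae_of_all _ hFnonneg) (HasSubset.Subset.eventuallyLE hsub)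
    have hvolpos : 0 < (volume (Metric.ball z₁ ε₂)).toReal :=
      ENNReal.toReal_pos (Metric.measure_ball_pos volume z₁ hε₂pos).ne' measure_ball_lt_top.ne
    rw [hCab]
    have hintpos : 0 < ∫ z in Metric.ball (0:ℂ) 1, F z :=
      lt_of_lt_of_le (mul_pos (half_pos hFz₁) hvolpos) (le_trans hint2 hmono)
    exact mul_pos (by positivity) hintpos
  · -- main estimate
    intro r hr
    obtain ⟨hrl, hru⟩ := hr
    have hr0 : 0 < r := lt_trans (by norm_num) hrl
    have hr2 : 0 < 1 - r^2 := by nlinarith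
    have hsubr : Metric.ball (0:ℂ) r ⊆ Metric.ball (0:ℂ) 1 :=
      Metric.ball_subset_ball hru.le
    have hFintr : IntegrableOn F (Metric.ball (0:ℂ) r) := hFint1.mono_set hsubr
    have hfirstint : IntegrableOn (fun z : ℂ => 1/(1-‖z‖^2)^2) (Metric.ball (0:ℂ) r) := by
      have hcont : ContinuousOn (fun z : ℂ => 1/(1-‖z‖^2)^2) (Metric.closedBall (0:ℂ) r) := by
        apply ContinuousOn.div continuousOn_const
        · fun_prop
        · intro z hz
          rw [Metric.mem_closedBall, dist_zero_right] at hz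
          have : ‖z‖^2 ≤ r^2 := by nlinarith [norm_nonneg z]
          have : 0 < 1 - ‖z‖^2 := by nlinarith
          positivity
      exact (hcont.integrableOn_compact (isCompact_closedBall 0 r)).mono_set
        Metric.ball_subset_closedBall
    -- split NG
    have hNG : NG G r = r^2/(1-r^2) - (1/Real.pi) * ∫ z in Metric.ball (0:ℂ) r, F z := by
      rw [NG]
      have hsplit : ∫ z in Metric.ball (0:ℂ) r,
          (1 / (1 - ‖z‖ ^ 2) ^ 2 - ‖deriv G z‖ ^ 2 / (1 + 2 * (G z).re) ^ 2)
          = (∫ z in Metric.ball (0:ℂ) r, 1/(1-‖z‖^2)^2)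
            - ∫ z in Metric.ball (0:ℂ) r, F z := by
        have : (fun z : ℂ => 1 / (1 - ‖z‖ ^ 2) ^ 2 - ‖deriv G z‖ ^ 2 / (1 + 2 * (G z).re) ^ 2)
            = fun z : ℂ => 1/(1-‖z‖^2)^2 - F z := by
          funext z; rw [hFeq z]
        rw [this, integral_sub hfirstint hFintr]
      rw [hsplit, first_integral hr0 hru, mul_sub]
      congr 1
      field_simp
    -- difference of integrals over annulus
    have hdiff : (∫ z in Metric.ball (0:ℂ) 1, F z) - (∫ z in Metric.ball (0:ℂ) r, F z)
        = ∫ z in Metric.ball (0:ℂ) 1 \ Metric.ball (0:ℂ) r, F z :=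
      (integral_diff measurableSet_ball hFint1 hsubr).symm
    have hvoldiff : (volume (Metric.ball (0:ℂ) 1 \ Metric.ball (0:ℂ) r)).toReal
        = Real.pi * (1 - r^2) := by
      rw [measure_diff hsubr measurableSet_ball.nullMeasurableSet measure_ball_lt_top.ne]
      rw [ENNReal.toReal_sub_of_le (measure_mono hsubr) measure_ball_lt_top.ne]
      rw [Complex.volume_ball, Complex.volume_ball]
      simp [ENNReal.toReal_mul, ENNReal.toReal_pow, ENNReal.toReal_ofReal hr0.le,
        ENNReal.toReal_ofReal (by norm_num : (0:ℝ) ≤ 1)]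
      try ring
    have hannulus : |∫ z in Metric.ball (0:ℂ) 1 \ Metric.ball (0:ℂ) r, F z|
        ≤ M * (Real.pi * (1 - r^2)) := by
      rw [← hvoldiff, ← Real.norm_eq_abs]
      apply norm_setIntegral_le_of_norm_le_const
      · exact lt_of_le_of_lt (measure_mono Set.diff_subset) measure_ball_lt_top
      · intro x hx
        have hx1 : ‖x‖ ≤ 1 := by
          have := hx.1
          rw [mem_ball_zero_iff] at this
          linarith
        rw [Real.norm_eq_abs, _root_.abs_of_nonneg (hFnonneg x)]
        exact hFbound x hx1
    -- conclude
    have hkey : NG G r - r ^ 2 / (1 - r ^ 2) + Cab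
        = (1/Real.pi) * ∫ z in Metric.ball (0:ℂ) 1 \ Metric.ball (0:ℂ) r, F z := by
      rw [hNG, hCab, ← hdiff]; ring
    rw [hkey, abs_mul, _root_.abs_of_nonneg (by positivity : (0:ℝ) ≤ 1/Real.pi)]
    calc (1/Real.pi) * |∫ z in Metric.ball (0:ℂ) 1 \ Metric.ball (0:ℂ) r, F z|
        ≤ (1/Real.pi) * (M * (Real.pi * (1 - r^2))) := by
          apply mul_le_mul_of_nonneg_left hannulus (by positivity)
      _ = M * (1 - r^2) := by field_simp
      _ ≤ (M + 1) * (1 - r^2) := by nlinarith
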